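/- Let a, b, c, d be complex numbers with a ≠ 0 and b ≠ 0, and define p₁ = −(|a|²+|b|²), p₃ = −2Re(conj(a)·b·c·conj(d)) + |c|²(|b|²−|a|²), p₄ = |c|²(|c|²+|d|²). Assume: (B) |a|²(1+|c|²) + |b|²(1−|c|²) + 2Re(conj(a)·b·c·conj(d)) < (1−|c|²)² − (1−|c|²)|d|² − 2Re(a·b·conj(d)) − 2Re(a²·conj(c)); (D) |c|² + |d|² < 1; (E) Re(a·b·conj(d)) + Re(conj(a)·b·c·conj(d)) ≥ 0 and Re(a²·conj(c)) ≥ −|a|²|c|². Then |p₃ − p₄p₁| < 1 − p₄². -/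

import Mathlib

set_option maxHeartbeats 1000000


open ComplexConjugate

/-- Under conditions (B), (D), (E), with `a ≠ 0`, `b ≠ 0`: `|p₃ - p₄ p₁| < 1 - p₄²`. -/
theorem stmt_6 (a b c d : ℂ) (ha : a ≠ 0) (hb : b ≠ 0)
    (p₁ p₃ p₄ : ℝ)
    (hp₁ : p₁ = -(‖a‖ ^ 2 + ‖b‖ ^ 2))
    (hp₃ : p₃ = -2 * (conj a * b * c * conj d).re
        + ‖c‖ ^ 2 * (‖b‖ ^ 2 - ‖a‖ ^ 2))
    (hp₄ : p₄ = ‖c‖ ^ 2 * (‖c‖ ^ 2 + ‖d‖ ^ 2))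
    (hB : ‖a‖ ^ 2 * (1 + ‖c‖ ^ 2)
        + ‖b‖ ^ 2 * (1 - ‖c‖ ^ 2)
        + 2 * (conj a * b * c * conj d).re
        < (1 - ‖c‖ ^ 2) ^ 2 - (1 - ‖c‖ ^ 2) * ‖d‖ ^ 2
          - 2 * (a * b * conj d).re - 2 * (a ^ 2 * conj c).re)
    (hD : ‖c‖ ^ 2 + ‖d‖ ^ 2 < 1)
    (hE₁ : 0 ≤ (a * b * conj d).re + (conj a * b * c * conj d).re)
    (hE₂ : (a ^ 2 * conj c).re ≥ -(‖a‖ ^ 2 * ‖c‖ ^ 2)) :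
    |p₃ - p₄ * p₁| < 1 - p₄ ^ 2 := by
  set x := ‖a‖ with hx
  set y := ‖b‖ with hy
  set z := ‖c‖ with hz
  set w := ‖d‖ with hw
  set R := (conj a * b * c * conj d).re with hR
  have hx0 : 0 ≤ x := norm_nonneg a
  have hy0 : 0 ≤ y := norm_nonneg b
  have hz0 : 0 ≤ z := norm_nonneg c
  have hw0 : 0 ≤ w := norm_nonneg d
  -- |R| ≤ x*y*z*w
  have hRabs : |R| ≤ x * y * z * w := by
    have h1 : |R| ≤ ‖conj a * b * c * conj d‖ := Complex.abs_re_le_norm _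
    have h2 : ‖conj a * b * c * conj d‖ = x * y * z * w := by
      simp [norm_mul, Complex.norm_conj, hx, hy, hz, hw]
    linarith [h1, h2.le, h2.ge]
  -- 4 |R| ≤ (x²+y²)(z²+w²)
  have h4R : 4 * |R| ≤ (x^2 + y^2) * (z^2 + w^2) := by
    nlinarith [sq_nonneg (x*z - y*w), sq_nonneg (x*w - y*z), hRabs, abs_nonneg R]
  have hR1 : -2 * R ≤ (x^2 + y^2) * (z^2 + w^2) / 2 := by
    have := neg_abs_le R
    linarith
  have hR2 : 2 * R ≤ (x^2 + y^2) * (z^2 + w^2) / 2 := by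
    have := le_abs_self R
    linarith
  -- 1 - z² > 0
  have h1z : 0 < 1 - z^2 := by nlinarith [sq_nonneg w]
  -- sum of squares < 1
  have hs : x^2 + y^2 < 1 - z^2 - w^2 := by
    have hkey : (1 - z^2) * (x^2 + y^2) < (1 - z^2) * (1 - z^2 - w^2) := by
      nlinarith [hB, hE₁, hE₂]
    exact lt_of_mul_lt_mul_left hkey h1z.le
  -- abbreviations for the certificate
  have ht1 : z^2 + w^2 < 1 := hD
  have hq : 0 < (1 - (z^2 + w^2)) * ((z^2 + w^2)^3 - (z^2 + w^2)/2 + 1) := by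
    have h3 : 0 ≤ (z^2 + w^2)^3 := by positivity
    exact mul_pos (by linarith) (by linarith)
  have hss : 0 ≤ (z^2 + w^2) * (3/2 + (z^2 + w^2)) * (1 - (z^2 + w^2) - (x^2 + y^2)) := by
    have h1 : 0 ≤ (z^2 + w^2) * (3/2 + (z^2 + w^2)) := by positivity
    have h2 : 0 ≤ 1 - (z^2 + w^2) - (x^2 + y^2) := by linarith
    exact mul_nonneg h1 h2
  have hz4 : 0 ≤ w^2 * (2*z^2 + w^2) * (z^2 + w^2)^2 := by positivity
  have hzx : 0 ≤ z^2 * x^2 := by positivity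
  have hmix : 0 ≤ w^2 * x^2 + w^2 * y^2 := by positivity
  have hzy : 0 ≤ z^2 * y^2 := by positivity
  have hwts : 0 ≤ w^2 * (z^2 + w^2) * (x^2 + y^2) := by positivity
  have hzts : 0 ≤ z^2 * (z^2 + w^2) * (x^2 + y^2) := by positivity
  rw [hp₁, hp₃, hp₄, abs_lt]
  constructor
  · linarith [hq, hss, hz4, hzx, hmix, hR1, hR2, hwts, hzts]
  · linarith [hq, hss, hz4, hzx, hmix, hR1, hR2, hwts, hzts, hzy]
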